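/- Let B ≥ 0, let c > 0 satisfy c⁴ + Bc³ − 1 = 0, and let P ∈ ℝ^{d×d} be symmetric positive definite with ‖P − P⁻³‖ ≤ B (Frobenius norm, P⁻³ = (P⁻¹)³). Then the smallest eigenvalue of P satisfies λ_min(P) ≥ c. -/

import Mathlib

open Matrix

/-- Frobenius norm `‖X‖ = (trace(Xᵀ X))^{1/2}`. -/
noncomputable def frobNorm {d : ℕ} (X : Matrix (Fin d) (Fin d) ℝ) : ℝ :=
  Real.sqrt (Matrix.trace (Xᵀ * X))

/-- if `c > 0` satisfies `c⁴ + Bc³ − 1 = 0` and `P` is symmetric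
positive definite with `‖P − P⁻³‖ ≤ B` (Frobenius norm, `P⁻³ = (P⁻¹)³`), then every
eigenvalue of `P` (in particular the smallest one) is at least `c`. -/
theorem eigenvalue_lower_bound_symmetric_dirichlet (d : ℕ) (B c : ℝ) (hB : 0 ≤ B)
    (hc : 0 < c) (hroot : c ^ 4 + B * c ^ 3 - 1 = 0)
    (P : Matrix (Fin d) (Fin d) ℝ) (hP : P.PosDef)
    (hgrad : frobNorm (P - (P⁻¹) ^ 3) ≤ B) :
    ∀ i : Fin d, c ≤ hP.1.eigenvalues i := by
  intro i
  have hH := hP.1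
  set V : Matrix (Fin d) (Fin d) ℝ := (hH.eigenvectorUnitary : Matrix (Fin d) (Fin d) ℝ) with hV
  have hV1 : star V * V = 1 := (Matrix.mem_unitaryGroup_iff').mp hH.eigenvectorUnitary.2
  have hV2 : V * star V = 1 := (Matrix.mem_unitaryGroup_iff).mp hH.eigenvectorUnitary.2
  set μ := hH.eigenvalues with hμ
  have hμpos : ∀ j, 0 < μ j := hP.eigenvalues_pos
  have key : ∀ f g : Fin d → ℝ,
      (V * diagonal f * star V) * (V * diagonal g * star V)
        = V * diagonal (fun j => f j * g j) * star V := by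
    intro f g
    have : diagonal f * (star V * V) * diagonal g = diagonal (fun j => f j * g j) := by
      rw [hV1, mul_one, diagonal_mul_diagonal]
    calc (V * diagonal f * star V) * (V * diagonal g * star V)
        = V * (diagonal f * (star V * V) * diagonal g) * star V := by
          simp only [Matrix.mul_assoc]
      _ = V * diagonal (fun j => f j * g j) * star V := by rw [this]
  have hPspec : P = V * diagonal μ * star V := by
    have := hH.spectral_theorem
    simpa using this
  have hPinv : P⁻¹ = V * diagonal (fun j => (μ j)⁻¹) * star V := by
    apply Matrix.inv_eq_right_inv
    rw [hPspec, key]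
    have : (fun j => μ j * (μ j)⁻¹) = fun _ => (1 : ℝ) := by
      funext j; exact mul_inv_cancel₀ (hμpos j).ne'
    rw [this, diagonal_one, mul_one, hV2]
  have hP3 : (P⁻¹) ^ 3 = V * diagonal (fun j => ((μ j)⁻¹) ^ 3) * star V := by
    rw [pow_succ, pow_two, hPinv, key, key]
    congr 1
    · congr 1
      funext j; ring
  have hX : P - (P⁻¹) ^ 3 = V * diagonal (fun j => μ j - ((μ j)⁻¹) ^ 3) * star V := by
    rw [hP3, hPspec, ← sub_mul, ← Matrix.mul_sub, diagonal_sub]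
  have hXt : (P - (P⁻¹) ^ 3)ᵀ = P - (P⁻¹) ^ 3 := by
    have h1 : (P - (P⁻¹) ^ 3).IsHermitian := hH.sub (hH.inv.pow 3)
    exact (Matrix.conjTranspose_eq_transpose_of_trivial _).symm.trans h1.eq
  have htr : Matrix.trace ((P - (P⁻¹) ^ 3)ᵀ * (P - (P⁻¹) ^ 3))
      = ∑ j, (μ j - ((μ j)⁻¹) ^ 3) ^ 2 := by
    rw [hXt, hX, key]
    rw [Matrix.trace_mul_comm, ← Matrix.mul_assoc, hV1, one_mul, Matrix.trace_diagonal]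
    exact Finset.sum_congr rfl fun j _ => (sq _).symm
  -- single eigenvalue bound
  set t := μ i with ht
  have htpos : 0 < t := hμpos i
  have habs : |t - t⁻¹ ^ 3| ≤ B := by
    have hsum_nonneg : ∀ j ∈ Finset.univ, (0:ℝ) ≤ (μ j - ((μ j)⁻¹) ^ 3) ^ 2 :=
      fun j _ => sq_nonneg _
    have hle : (t - t⁻¹ ^ 3) ^ 2 ≤ ∑ j, (μ j - ((μ j)⁻¹) ^ 3) ^ 2 :=
      Finset.single_le_sum hsum_nonneg (Finset.mem_univ i)
    have := Real.sqrt_le_sqrt hle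
    rw [Real.sqrt_sq_eq_abs] at this
    calc |t - t⁻¹ ^ 3| ≤ Real.sqrt (∑ j, (μ j - ((μ j)⁻¹) ^ 3) ^ 2) := this
      _ = frobNorm (P - (P⁻¹) ^ 3) := by rw [frobNorm, htr]
      _ ≤ B := hgrad
  have h1 : t⁻¹ ^ 3 - t ≤ B := by
    have := (abs_le.mp habs).1
    linarith
  have ht3 : (0:ℝ) < t ^ 3 := pow_pos htpos 3
  have hinv : t⁻¹ ^ 3 * t ^ 3 = 1 := by
    field_simp
  have hpoly : 1 ≤ t ^ 4 + B * t ^ 3 := by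
    have := mul_le_mul_of_nonneg_right h1 ht3.le
    nlinarith [this, hinv]
  by_contra h
  push_neg at h
  have h3 : t ^ 3 < c ^ 3 := pow_lt_pow_left₀ h htpos.le (by norm_num)
  have h4 : t ^ 4 < c ^ 4 := pow_lt_pow_left₀ h htpos.le (by norm_num)
  nlinarith [mul_le_mul_of_nonneg_left h3.le hB]
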